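/- Under the hypotheses that span{z₁,…,zₙ} = ℝ^p, ρ is strictly increasing and ρ(eˣ) is strictly convex, the function L₀(Σ) = Σᵢ ρ(zᵢᵀΣ⁻¹zᵢ) + (n/2) log det Σ is geodesically strictly convex on S₊₊(p); in particular L₀ has at most one minimizer. -/

import Mathlib

open Matrix

noncomputable def mpow {p : ℕ} (A : Matrix (Fin p) (Fin p) ℝ) (t : ℝ) :
    Matrix (Fin p) (Fin p) ℝ :=
  if h : A.IsHermitian then
    (h.eigenvectorUnitary : Matrix (Fin p) (Fin p) ℝ) *
      Matrix.diagonal (fun i => h.eigenvalues i ^ t) *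
      (star (h.eigenvectorUnitary : Matrix (Fin p) (Fin p) ℝ))
  else A

variable {p : ℕ} {A : Matrix (Fin p) (Fin p) ℝ}

lemma mpow_eq (h : A.IsHermitian) (t : ℝ) :
    mpow A t = (h.eigenvectorUnitary : Matrix (Fin p) (Fin p) ℝ) *
      Matrix.diagonal (fun i => h.eigenvalues i ^ t) *
      (star (h.eigenvectorUnitary : Matrix (Fin p) (Fin p) ℝ)) := by
  rw [mpow, dif_pos h]

lemma U_mul_star (h : A.IsHermitian) :
    (h.eigenvectorUnitary : Matrix (Fin p) (Fin p) ℝ) *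
      star (h.eigenvectorUnitary : Matrix (Fin p) (Fin p) ℝ) = 1 :=
  (Matrix.mem_unitaryGroup_iff).mp (h.eigenvectorUnitary).2

lemma star_mul_U (h : A.IsHermitian) :
    star (h.eigenvectorUnitary : Matrix (Fin p) (Fin p) ℝ) *
      (h.eigenvectorUnitary : Matrix (Fin p) (Fin p) ℝ) = 1 :=
  (Matrix.mem_unitaryGroup_iff').mp (h.eigenvectorUnitary).2

lemma mpow_mul_mpow (hA : A.PosDef) (s t : ℝ) :
    mpow A s * mpow A t = mpow A (s + t) := by
  have h := hA.isHermitian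
  rw [mpow_eq h, mpow_eq h, mpow_eq h]
  set U := (h.eigenvectorUnitary : Matrix (Fin p) (Fin p) ℝ)
  calc U * Matrix.diagonal (fun i => h.eigenvalues i ^ s) * star U *
        (U * Matrix.diagonal (fun i => h.eigenvalues i ^ t) * star U)
      = U * (Matrix.diagonal (fun i => h.eigenvalues i ^ s) * ((star U * U) *
          Matrix.diagonal (fun i => h.eigenvalues i ^ t))) * star U := by
        noncomm_ring
    _ = U * Matrix.diagonal (fun i => h.eigenvalues i ^ (s + t)) * star U := by
        rw [star_mul_U h, one_mul, Matrix.diagonal_mul_diagonal,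
          show (fun i => h.eigenvalues i ^ s * h.eigenvalues i ^ t)
              = (fun i => h.eigenvalues i ^ (s + t)) from
            funext fun i => (Real.rpow_add (hA.eigenvalues_pos i) s t).symm, mul_assoc]

lemma mpow_zero (h : A.IsHermitian) : mpow A 0 = 1 := by
  rw [mpow_eq h]
  simp only [Real.rpow_zero, Matrix.diagonal_one, mul_one]
  exact U_mul_star h

lemma mpow_one (h : A.IsHermitian) : mpow A 1 = A := by
  rw [mpow_eq h]
  simp only [Real.rpow_one]
  have := h.spectral_theorem
  rw [Unitary.conjStarAlgAut_apply] at this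
  convert this.symm using 3 <;> rfl

lemma real_conjTranspose_eq_transpose (B : Matrix (Fin p) (Fin p) ℝ) : Bᴴ = Bᵀ := by
  ext i j; simp [Matrix.conjTranspose_apply]

lemma posDef_conj {B : Matrix (Fin p) (Fin p) ℝ} (hA : A.PosDef) (hB : IsUnit B.det) :
    (B * A * Bᴴ).PosDef := by
  rw [Matrix.posDef_iff_dotProduct_mulVec]
  constructor
  · have h1 : (B * A * Bᴴ)ᴴ = B * Aᴴ * Bᴴ := by
      rw [Matrix.conjTranspose_mul, Matrix.conjTranspose_mul, Matrix.conjTranspose_conjTranspose,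
        mul_assoc]
    rw [Matrix.IsHermitian, h1, hA.isHermitian.eq]
  · intro x hx
    have hy : Bᴴ *ᵥ x ≠ 0 := by
      intro h0
      apply hx
      have : Function.Injective (Bᴴ).mulVec := by
        rw [Matrix.mulVec_injective_iff_isUnit]
        apply Matrix.isUnit_iff_isUnit_det _ |>.2
        rwa [Matrix.det_conjTranspose, isUnit_star]
      have := this (a₁ := x) (a₂ := 0) (by simpa using h0)
      exact this
    have key : dotProduct (star x) ((B * A * Bᴴ) *ᵥ x)
        = dotProduct (star (Bᴴ *ᵥ x)) (A *ᵥ (Bᴴ *ᵥ x)) := by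
      rw [← Matrix.mulVec_mulVec, ← Matrix.mulVec_mulVec, dotProduct_mulVec (star x)]
      congr 1
      rw [real_conjTranspose_eq_transpose, ← Matrix.mulVec_transpose]
      ext i
      simp
    rw [key]
    exact (Matrix.posDef_iff_dotProduct_mulVec.mp hA).2 hy

lemma mpow_posDef (hA : A.PosDef) (t : ℝ) : (mpow A t).PosDef := by
  have h := hA.isHermitian
  rw [mpow_eq h]
  have hD : (Matrix.diagonal (fun i => h.eigenvalues i ^ t)).PosDef :=
    Matrix.posDef_diagonal_iff.mpr fun i => Real.rpow_pos_of_pos (hA.eigenvalues_pos i) t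
  have hU : IsUnit (h.eigenvectorUnitary : Matrix (Fin p) (Fin p) ℝ).det := by
    have := U_mul_star h
    have := congrArg Matrix.det this
    rw [Matrix.det_mul, Matrix.det_one] at this
    exact IsUnit.of_mul_eq_one _ this
  have := posDef_conj (A := Matrix.diagonal (fun i => h.eigenvalues i ^ t))
    (B := (h.eigenvectorUnitary : Matrix (Fin p) (Fin p) ℝ)) hD hU
  rwa [Matrix.star_eq_conjTranspose, real_conjTranspose_eq_transpose]

lemma mpow_isHermitian (hA : A.PosDef) (t : ℝ) : (mpow A t).IsHermitian :=
  (mpow_posDef hA t).isHermitian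

lemma mpow_inv (hA : A.PosDef) (t : ℝ) : (mpow A t)⁻¹ = mpow A (-t) := by
  apply Matrix.inv_eq_right_inv
  rw [mpow_mul_mpow hA, add_neg_cancel, mpow_zero hA.isHermitian]

lemma det_mpow (hA : A.PosDef) (t : ℝ) :
    (mpow A t).det = ∏ i, hA.isHermitian.eigenvalues i ^ t := by
  have h := hA.isHermitian
  rw [mpow_eq h, Matrix.det_mul, Matrix.det_mul, Matrix.det_diagonal]
  have h1 : (h.eigenvectorUnitary : Matrix (Fin p) (Fin p) ℝ).det *
      (star (h.eigenvectorUnitary : Matrix (Fin p) (Fin p) ℝ)).det = 1 := by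
    rw [← Matrix.det_mul, U_mul_star h, Matrix.det_one]
  ring_nf
  ring_nf at h1
  rw [mul_comm, ← mul_assoc, mul_comm ((star _ : Matrix (Fin p) (Fin p) ℝ).det), h1, one_mul]

lemma transpose_of_hermitian (h : A.IsHermitian) : Aᵀ = A := by
  rw [← real_conjTranspose_eq_transpose, h.eq]

lemma quad_mpow (hA : A.PosDef) (t : ℝ) (v : Fin p → ℝ) :
    dotProduct v (mpow A t *ᵥ v) =
      ∑ k, hA.isHermitian.eigenvalues k ^ t *
        ((star (hA.isHermitian.eigenvectorUnitary : Matrix (Fin p) (Fin p) ℝ) *ᵥ v) k) ^ 2 := by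
  have h := hA.isHermitian
  set U := (h.eigenvectorUnitary : Matrix (Fin p) (Fin p) ℝ) with hUdef
  set w := star U *ᵥ v with hw
  rw [mpow_eq h, ← Matrix.mulVec_mulVec, ← Matrix.mulVec_mulVec, dotProduct_mulVec v]
  have hvU : v ᵥ* U = w := by
    rw [hw, Matrix.star_eq_conjTranspose, real_conjTranspose_eq_transpose,
      Matrix.mulVec_transpose]
  rw [hvU]
  simp [dotProduct, Matrix.mulVec_diagonal, sq]
  exact Finset.sum_congr rfl fun k _ => by ring

/-- The geodesic `γ(t) = S1^{1/2} (S1^{-1/2} S2 S1^{-1/2})^t S1^{1/2}` on `S₊₊(p)`. -/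
noncomputable def geo {p : ℕ} (A B : Matrix (Fin p) (Fin p) ℝ) (t : ℝ) :
    Matrix (Fin p) (Fin p) ℝ :=
  mpow A (1/2) * mpow (mpow A (-(1/2)) * B * mpow A (-(1/2))) t * mpow A (1/2)

variable {S1 S2 : Matrix (Fin p) (Fin p) ℝ}

lemma posDef_M (hS1 : S1.PosDef) (hS2 : S2.PosDef) :
    (mpow S1 (-(1/2)) * S2 * mpow S1 (-(1/2))).PosDef := by
  have hC := mpow_posDef hS1 (-(1/2))
  have := posDef_conj (A := S2) (B := mpow S1 (-(1/2))) hS2 hC.det_pos.ne'.isUnit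
  rwa [hC.isHermitian.eq] at this

lemma HC_one (hS1 : S1.PosDef) : mpow S1 (1/2) * mpow S1 (-(1/2)) = 1 := by
  rw [mpow_mul_mpow hS1, show (1/2 + -(1/2) : ℝ) = 0 by ring, mpow_zero hS1.isHermitian]

lemma CH_one (hS1 : S1.PosDef) : mpow S1 (-(1/2)) * mpow S1 (1/2) = 1 := by
  rw [mpow_mul_mpow hS1, show (-(1/2) + 1/2 : ℝ) = 0 by ring, mpow_zero hS1.isHermitian]

lemma HH_eq (hS1 : S1.PosDef) : mpow S1 (1/2) * mpow S1 (1/2) = S1 := by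
  rw [mpow_mul_mpow hS1, show (1/2 + 1/2 : ℝ) = 1 by ring, mpow_one hS1.isHermitian]

lemma geo_zero (hS1 : S1.PosDef) (hS2 : S2.PosDef) : geo S1 S2 0 = S1 := by
  rw [geo, mpow_zero (posDef_M hS1 hS2).isHermitian, mul_one, HH_eq hS1]

lemma geo_one (hS1 : S1.PosDef) (hS2 : S2.PosDef) : geo S1 S2 1 = S2 := by
  rw [geo, mpow_one (posDef_M hS1 hS2).isHermitian,
    show mpow S1 (1/2) * (mpow S1 (-(1/2)) * S2 * mpow S1 (-(1/2))) * mpow S1 (1/2)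
        = (mpow S1 (1/2) * mpow S1 (-(1/2))) * S2 * (mpow S1 (-(1/2)) * mpow S1 (1/2)) from by
      noncomm_ring, HC_one hS1, CH_one hS1, one_mul, mul_one]

lemma geo_posDef (hS1 : S1.PosDef) (hS2 : S2.PosDef) (t : ℝ) : (geo S1 S2 t).PosDef := by
  have hH := mpow_posDef hS1 (1/2)
  have := posDef_conj (A := mpow (mpow S1 (-(1/2)) * S2 * mpow S1 (-(1/2))) t)
    (B := mpow S1 (1/2)) (mpow_posDef (posDef_M hS1 hS2) t) hH.det_pos.ne'.isUnit
  rw [hH.isHermitian.eq] at this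
  exact this

lemma geo_inv (hS1 : S1.PosDef) (hS2 : S2.PosDef) (t : ℝ) :
    (geo S1 S2 t)⁻¹ = mpow S1 (-(1/2)) *
      mpow (mpow S1 (-(1/2)) * S2 * mpow S1 (-(1/2))) (-t) * mpow S1 (-(1/2)) := by
  rw [geo, Matrix.mul_inv_rev, Matrix.mul_inv_rev, mpow_inv hS1,
    mpow_inv (posDef_M hS1 hS2)]
  noncomm_ring

lemma geo_log_det (hS1 : S1.PosDef) (hS2 : S2.PosDef) (t : ℝ) :
    Real.log (geo S1 S2 t).det = Real.log S1.det +
      t * ∑ k, Real.log ((posDef_M hS1 hS2).isHermitian.eigenvalues k) := by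
  have hM := posDef_M hS1 hS2
  have h1 : (geo S1 S2 t).det = S1.det * ∏ k, hM.isHermitian.eigenvalues k ^ t := by
    rw [geo, Matrix.det_mul, Matrix.det_mul, det_mpow hM,
      show (mpow S1 (1/2)).det * (∏ k, hM.isHermitian.eigenvalues k ^ t) * (mpow S1 (1/2)).det
          = ((mpow S1 (1/2)).det * (mpow S1 (1/2)).det) *
            ∏ k, hM.isHermitian.eigenvalues k ^ t from by ring,
      ← Matrix.det_mul, HH_eq hS1]
  have hprodpos : ∀ k, (0:ℝ) < hM.isHermitian.eigenvalues k ^ t :=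
    fun k => Real.rpow_pos_of_pos (hM.eigenvalues_pos k) t
  rw [h1, Real.log_mul hS1.det_pos.ne' (Finset.prod_pos (fun k _ => hprodpos k)).ne',
    Real.log_prod (fun k _ => (hprodpos k).ne')]
  congr 1
  rw [Finset.mul_sum]
  exact Finset.sum_congr rfl fun k _ => Real.log_rpow (hM.eigenvalues_pos k) t

lemma geo_quad (hS1 : S1.PosDef) (hS2 : S2.PosDef) (t : ℝ) (v : Fin p → ℝ) :
    dotProduct v ((geo S1 S2 t)⁻¹ *ᵥ v) =
      ∑ k, (posDef_M hS1 hS2).isHermitian.eigenvalues k ^ (-t) *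
        ((star ((posDef_M hS1 hS2).isHermitian.eigenvectorUnitary :
            Matrix (Fin p) (Fin p) ℝ) *ᵥ (mpow S1 (-(1/2)) *ᵥ v)) k) ^ 2 := by
  rw [geo_inv hS1 hS2 t, ← Matrix.mulVec_mulVec, ← Matrix.mulVec_mulVec,
    dotProduct_mulVec v]
  have hvC : v ᵥ* (mpow S1 (-(1/2))) = mpow S1 (-(1/2)) *ᵥ v := by
    rw [← Matrix.mulVec_transpose, transpose_of_hermitian (mpow_isHermitian hS1 (-(1/2)))]
  rw [hvC]
  exact quad_mpow (posDef_M hS1 hS2) (-t) (mpow S1 (-(1/2)) *ᵥ v)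

lemma sum_holder {m : ℕ} (c q : Fin m → ℝ) (hc : ∀ k, 0 ≤ c k) (hq : ∀ k, 0 < q k)
    {t : ℝ} (ht0 : 0 ≤ t) (ht1 : t ≤ 1)
    (hXpos : 0 < ∑ k, c k) (hYpos : 0 < ∑ k, c k * q k) :
    ∑ k, c k * q k ^ t ≤ (∑ k, c k) ^ (1 - t) * (∑ k, c k * q k) ^ t := by
  set X := ∑ k, c k with hX
  set Y := ∑ k, c k * q k with hY
  have key : ∀ k, c k * q k ^ t ≤
      X ^ (1 - t) * Y ^ t * (c k * ((1 - t) / X + t * (q k / Y))) := by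
    intro k
    have amgm := Real.geom_mean_le_arith_mean2_weighted (by linarith : (0:ℝ) ≤ 1 - t) ht0
      (one_div_pos.mpr hXpos).le
      (div_pos (hq k) hYpos).le (by ring)
    have e1 : X ^ (1 - t) * (1 / X) ^ (1 - t) = 1 := by
      rw [← Real.mul_rpow hXpos.le (one_div_pos.mpr hXpos).le]
      rw [mul_one_div, div_self hXpos.ne', Real.one_rpow]
    have e2 : Y ^ t * (q k / Y) ^ t = q k ^ t := by
      rw [← Real.mul_rpow hYpos.le (div_pos (hq k) hYpos).le]
      rw [mul_div_cancel₀ _ hYpos.ne']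
    have h4 := mul_le_mul_of_nonneg_left amgm
      (mul_nonneg (hc k) (mul_nonneg (Real.rpow_nonneg hXpos.le (1-t)) (Real.rpow_nonneg hYpos.le t)))
    calc c k * q k ^ t
        = c k * (X ^ (1 - t) * Y ^ t) * ((1 / X) ^ (1 - t) * (q k / Y) ^ t) := by
          rw [show c k * (X ^ (1 - t) * Y ^ t) * ((1 / X) ^ (1 - t) * (q k / Y) ^ t)
              = c k * ((X ^ (1 - t) * (1 / X) ^ (1 - t)) * (Y ^ t * (q k / Y) ^ t)) from by ring,
            e1, e2, one_mul]
      _ ≤ c k * (X ^ (1 - t) * Y ^ t) * ((1 - t) * (1 / X) + t * (q k / Y)) := h4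
      _ = X ^ (1 - t) * Y ^ t * (c k * ((1 - t) / X + t * (q k / Y))) := by ring
  calc ∑ k, c k * q k ^ t
      ≤ ∑ k, X ^ (1 - t) * Y ^ t * (c k * ((1 - t) / X + t * (q k / Y))) :=
        Finset.sum_le_sum fun k _ => key k
    _ = X ^ (1 - t) * Y ^ t * ((1 - t) / X * X + t / Y * Y) := by
        rw [← Finset.mul_sum]
        congr 1
        rw [hX, hY, Finset.mul_sum, Finset.mul_sum, ← Finset.sum_add_distrib]
        exact Finset.sum_congr rfl fun k _ => by ring
    _ = X ^ (1 - t) * Y ^ t := by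
        rw [div_mul_cancel₀ _ hXpos.ne', div_mul_cancel₀ _ hYpos.ne']
        ring_nf

lemma per_term (ρ : ℝ → ℝ) (hmono : StrictMonoOn ρ (Set.Ioi 0))
    (hconv : StrictConvexOn ℝ Set.univ (fun x : ℝ => ρ (Real.exp x)))
    {m : ℕ} (c l : Fin m → ℝ) (hc : ∀ k, 0 ≤ c k) {t : ℝ} (ht : t ∈ Set.Ioo (0:ℝ) 1) :
    (ρ (∑ k, c k * Real.exp (l k * t)) ≤
      (1 - t) * ρ (∑ k, c k) + t * ρ (∑ k, c k * Real.exp (l k))) ∧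
    ((∃ k, c k ≠ 0 ∧ l k ≠ 0) →
      ρ (∑ k, c k * Real.exp (l k * t)) <
        (1 - t) * ρ (∑ k, c k) + t * ρ (∑ k, c k * Real.exp (l k))) := by
  obtain ⟨ht0, ht1⟩ := ht
  by_cases hdeg : ∀ k, c k = 0
  · constructor
    · simp only [hdeg, zero_mul, Finset.sum_const_zero]
      linarith
    · rintro ⟨k, hk, -⟩
      exact absurd (hdeg k) hk
  push_neg at hdeg
  obtain ⟨k₀, hk₀⟩ := hdeg
  have hck₀ : 0 < c k₀ := lt_of_le_of_ne (hc k₀) (Ne.symm hk₀)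
  set q : Fin m → ℝ := fun k => Real.exp (l k) with hqdef
  have hq : ∀ k, 0 < q k := fun k => Real.exp_pos _
  set X := ∑ k, c k with hX
  set Y := ∑ k, c k * q k with hY
  set G := ∑ k, c k * Real.exp (l k * t) with hG
  have hXpos : 0 < X := Finset.sum_pos' (fun k _ => hc k) ⟨k₀, Finset.mem_univ _, hck₀⟩
  have hYpos : 0 < Y := Finset.sum_pos' (fun k _ => mul_nonneg (hc k) (hq k).le)
    ⟨k₀, Finset.mem_univ _, mul_pos hck₀ (hq k₀)⟩
  have hGq : G = ∑ k, c k * q k ^ t := by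
    rw [hG]
    exact Finset.sum_congr rfl fun k _ => by rw [hqdef, Real.exp_mul]
  have hGpos : 0 < G := by
    rw [hGq]
    exact Finset.sum_pos' (fun k _ => mul_nonneg (hc k) (Real.rpow_nonneg (hq k).le t))
      ⟨k₀, Finset.mem_univ _, mul_pos hck₀ (Real.rpow_pos_of_pos (hq k₀) t)⟩
  -- Hölder bound
  have holder : G ≤ X ^ (1 - t) * Y ^ t := by
    rw [hGq]
    exact sum_holder c q hc hq ht0.le ht1.le hXpos hYpos
  set a := Real.log X with ha
  set b := Real.log Y with hb
  have hXa : Real.exp a = X := Real.exp_log hXpos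
  have hYb : Real.exp b = Y := Real.exp_log hYpos
  have hcomb : X ^ (1 - t) * Y ^ t = Real.exp ((1 - t) * a + t * b) := by
    rw [Real.rpow_def_of_pos hXpos, Real.rpow_def_of_pos hYpos, ← Real.exp_add]
    rw [← ha, ← hb]
    ring_nf
  have step1 : ρ G ≤ ρ (Real.exp ((1 - t) * a + t * b)) := by
    rcases eq_or_lt_of_le holder with h | h
    · rw [← hcomb, ← h]
    · exact (hmono (Set.mem_Ioi.mpr hGpos)
        (Set.mem_Ioi.mpr (Real.exp_pos _)) (hcomb ▸ h)).le
  have step2 : ρ (Real.exp ((1 - t) * a + t * b)) ≤ (1 - t) * ρ X + t * ρ Y := by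
    have := hconv.convexOn.2 (Set.mem_univ a) (Set.mem_univ b)
      (by linarith : (0:ℝ) ≤ 1 - t) ht0.le (by ring)
    simpa [hXa, hYb] using this
  refine ⟨le_trans step1 step2, ?_⟩
  rintro ⟨k₁, hck₁, hlk₁⟩
  have hck₁' : 0 < c k₁ := lt_of_le_of_ne (hc k₁) (Ne.symm hck₁)
  by_cases hab : a = b
  · -- endpoints equal: use strict pointwise AM-GM
    have hXY : X = Y := by rw [← hXa, ← hYb, hab]
    have hGlt : G < X := by
      rw [hGq]
      have hle : ∀ k ∈ Finset.univ, c k * q k ^ t ≤ (1 - t) * c k + t * (c k * q k) := by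
        intro k _
        have amgm : q k ^ t ≤ (1 - t) * 1 + t * q k := by
          have := Real.geom_mean_le_arith_mean2_weighted
            (by linarith : (0:ℝ) ≤ 1 - t) ht0.le zero_le_one (hq k).le (by ring)
          simpa [Real.one_rpow] using this
        nlinarith [hc k]
      have hlt : c k₁ * q k₁ ^ t < (1 - t) * c k₁ + t * (c k₁ * q k₁) := by
        have strict : q k₁ ^ t < (1 - t) * 1 + t * q k₁ := by
          have hlog : Real.log (q k₁) ≠ 0 := by
            rw [hqdef, Real.log_exp]; exact hlk₁
          have := strictConvexOn_exp.2 (Set.mem_univ (0:ℝ))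
            (Set.mem_univ (Real.log (q k₁))) (Ne.symm hlog)
            (by linarith : (0:ℝ) < 1 - t) ht0 (by ring)
          simpa [Real.exp_log (hq k₁), Real.rpow_def_of_pos (hq k₁), mul_comm] using this
        nlinarith
      calc ∑ k, c k * q k ^ t < ∑ k, ((1 - t) * c k + t * (c k * q k)) :=
            Finset.sum_lt_sum hle ⟨k₁, Finset.mem_univ _, hlt⟩
        _ = (1 - t) * X + t * Y := by
            rw [hX, hY, Finset.mul_sum, Finset.mul_sum, Finset.sum_add_distrib]
        _ = X := by rw [← hXY]; ring
    have : ρ G < ρ X := hmono (Set.mem_Ioi.mpr hGpos) (Set.mem_Ioi.mpr hXpos) hGlt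
    have hρXY : (1 - t) * ρ X + t * ρ Y = ρ X := by rw [hXY]; ring
    linarith
  · -- endpoints differ: strict convexity of ρ ∘ exp
    have step2' : ρ (Real.exp ((1 - t) * a + t * b)) < (1 - t) * ρ X + t * ρ Y := by
      have := hconv.2 (Set.mem_univ a) (Set.mem_univ b) hab
        (by linarith : (0:ℝ) < 1 - t) ht0 (by ring)
      simpa [hXa, hYb] using this
    linarith

set_option maxHeartbeats 1000000 in
lemma reduction {n : ℕ} (z : Fin n → Fin p → ℝ)
    (hspan : Submodule.span ℝ (Set.range z) = ⊤)
    (hS1 : S1.PosDef) (hS2 : S2.PosDef) (hne : S1 ≠ S2) :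
    ∃ (c : Fin n → Fin p → ℝ) (l : Fin p → ℝ) (L : ℝ),
      (∀ i k, 0 ≤ c i k) ∧
      (∀ s : ℝ, ∀ i, dotProduct (z i) ((geo S1 S2 s)⁻¹ *ᵥ z i)
          = ∑ k, c i k * Real.exp (l k * s)) ∧
      (∀ i, dotProduct (z i) (S1⁻¹ *ᵥ z i) = ∑ k, c i k) ∧
      (∀ i, dotProduct (z i) (S2⁻¹ *ᵥ z i) = ∑ k, c i k * Real.exp (l k)) ∧
      (∀ s : ℝ, Real.log (geo S1 S2 s).det = Real.log S1.det + s * L) ∧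
      (Real.log S2.det = Real.log S1.det + L) ∧
      (∃ i k, c i k ≠ 0 ∧ l k ≠ 0) := by
  refine ⟨fun i k => ((star ((posDef_M hS1 hS2).isHermitian.eigenvectorUnitary :
        Matrix (Fin p) (Fin p) ℝ) *ᵥ (mpow S1 (-(1/2)) *ᵥ z i)) k) ^ 2,
    fun k => -Real.log ((posDef_M hS1 hS2).isHermitian.eigenvalues k),
    ∑ k, Real.log ((posDef_M hS1 hS2).isHermitian.eigenvalues k),
    fun i k => sq_nonneg _, ?_, ?_, ?_, ?_, ?_, ?_⟩
  · intro s i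
    rw [geo_quad hS1 hS2 s (z i)]
    refine Finset.sum_congr rfl fun k _ => ?_
    rw [Real.rpow_def_of_pos ((posDef_M hS1 hS2).eigenvalues_pos k), mul_neg, ← neg_mul]
    exact mul_comm _ _
  · intro i
    have h := geo_quad hS1 hS2 0 (z i)
    rw [geo_zero hS1 hS2] at h
    rw [h]
    refine Finset.sum_congr rfl fun k _ => ?_
    rw [neg_zero, Real.rpow_zero, one_mul]
  · intro i
    have h := geo_quad hS1 hS2 1 (z i)
    rw [geo_one hS1 hS2] at h
    rw [h]
    refine Finset.sum_congr rfl fun k _ => ?_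
    rw [Real.rpow_def_of_pos ((posDef_M hS1 hS2).eigenvalues_pos k), mul_neg_one]
    exact mul_comm _ _
  · exact fun s => geo_log_det hS1 hS2 s
  · have h := geo_log_det hS1 hS2 1
    rw [geo_one hS1 hS2, one_mul] at h
    exact h
  · -- strictness witness
    have hstep : ∃ k, (posDef_M hS1 hS2).isHermitian.eigenvalues k ≠ 1 := by
      by_contra hall
      push_neg at hall
      apply hne
      have hM1 : mpow S1 (-(1/2)) * S2 * mpow S1 (-(1/2)) = 1 := by
        rw [(posDef_M hS1 hS2).isHermitian.spectral_theorem]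
        have he : (RCLike.ofReal ∘ (posDef_M hS1 hS2).isHermitian.eigenvalues : Fin p → ℝ)
            = fun _ => 1 := by
          funext k
          rw [Function.comp_apply, hall k]
          rfl
        rw [he]
        rw [Matrix.diagonal_one, Unitary.conjStarAlgAut_apply, mul_one]
        exact U_mul_star (posDef_M hS1 hS2).isHermitian
      have h2 := geo_one hS1 hS2
      rw [geo, mpow_one (posDef_M hS1 hS2).isHermitian, hM1, mul_one, HH_eq hS1] at h2
      exact h2
    obtain ⟨k, hk⟩ := hstep
    have hlk : -Real.log ((posDef_M hS1 hS2).isHermitian.eigenvalues k) ≠ 0 := by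
      rw [neg_ne_zero]
      intro h0
      rcases (Real.log_eq_zero).mp h0 with h | h | h
      · exact absurd h ((posDef_M hS1 hS2).eigenvalues_pos k).ne'
      · exact hk h
      · linarith [(posDef_M hS1 hS2).eigenvalues_pos k]
    have hexists : ∃ i, (star ((posDef_M hS1 hS2).isHermitian.eigenvectorUnitary :
        Matrix (Fin p) (Fin p) ℝ) *ᵥ (mpow S1 (-(1/2)) *ᵥ z i)) k ≠ 0 := by
      by_contra hall
      push_neg at hall
      have huW : ∀ i, star ((posDef_M hS1 hS2).isHermitian.eigenvectorUnitary :
          Matrix (Fin p) (Fin p) ℝ) *ᵥ (mpow S1 (-(1/2)) *ᵥ z i)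
          = (star ((posDef_M hS1 hS2).isHermitian.eigenvectorUnitary :
          Matrix (Fin p) (Fin p) ℝ) * mpow S1 (-(1/2))) *ᵥ z i := by
        intro i
        rw [Matrix.mulVec_mulVec]
      have hqz : ∀ i, dotProduct
          ((star ((posDef_M hS1 hS2).isHermitian.eigenvectorUnitary :
            Matrix (Fin p) (Fin p) ℝ) * mpow S1 (-(1/2))) k) (z i) = 0 := by
        intro i
        have h := hall i
        rw [huW i] at h
        exact h
      have hspan' : ∀ v ∈ Submodule.span ℝ (Set.range z), dotProduct
          ((star ((posDef_M hS1 hS2).isHermitian.eigenvectorUnitary :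
            Matrix (Fin p) (Fin p) ℝ) * mpow S1 (-(1/2))) k) v = 0 := by
        intro v hv
        induction hv using Submodule.span_induction with
        | mem x hx => obtain ⟨i, rfl⟩ := hx; exact hqz i
        | zero => simp
        | add x y _ _ hx hy => rw [dotProduct_add, hx, hy, add_zero]
        | smul a x _ hx => rw [dotProduct_smul, hx, smul_zero]
      have hqq := hspan' ((star ((posDef_M hS1 hS2).isHermitian.eigenvectorUnitary :
          Matrix (Fin p) (Fin p) ℝ) * mpow S1 (-(1/2))) k) (hspan ▸ Submodule.mem_top)
      have hq0 := dotProduct_self_eq_zero.mp hqq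
      have hdetW : (star ((posDef_M hS1 hS2).isHermitian.eigenvectorUnitary :
          Matrix (Fin p) (Fin p) ℝ) * mpow S1 (-(1/2))).det ≠ 0 := by
        rw [Matrix.det_mul]
        have hdV : (star ((posDef_M hS1 hS2).isHermitian.eigenvectorUnitary :
            Matrix (Fin p) (Fin p) ℝ)).det *
            ((posDef_M hS1 hS2).isHermitian.eigenvectorUnitary :
            Matrix (Fin p) (Fin p) ℝ).det = 1 := by
          rw [← Matrix.det_mul, star_mul_U (posDef_M hS1 hS2).isHermitian, Matrix.det_one]
        exact mul_ne_zero (left_ne_zero_of_mul_eq_one hdV)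
          (mpow_posDef hS1 (-(1/2))).det_pos.ne'
      apply hdetW
      apply Matrix.det_eq_zero_of_row_eq_zero k
      intro j
      exact congrFun hq0 j
    obtain ⟨i, hi⟩ := hexists
    exact ⟨i, k, pow_ne_zero 2 hi, hlk⟩

theorem L0_geodesically_strictly_convex {p n : ℕ} (z : Fin n → Fin p → ℝ)
    (hspan : Submodule.span ℝ (Set.range z) = ⊤) (ρ : ℝ → ℝ)
    (hcont : ContinuousOn ρ (Set.Ioi 0))
    (hmono : StrictMonoOn ρ (Set.Ioi 0))
    (hconv : StrictConvexOn ℝ Set.univ (fun x : ℝ => ρ (Real.exp x))) :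
    (∀ (S1 S2 : Matrix (Fin p) (Fin p) ℝ), S1.PosDef → S2.PosDef → S1 ≠ S2 →
      ∀ t ∈ Set.Ioo (0:ℝ) 1,
        (∑ i, ρ (z i ⬝ᵥ (geo S1 S2 t)⁻¹ *ᵥ z i)
            + (n / 2 : ℝ) * Real.log (geo S1 S2 t).det) <
          (1 - t) * (∑ i, ρ (z i ⬝ᵥ S1⁻¹ *ᵥ z i) + (n / 2 : ℝ) * Real.log S1.det)
            + t * (∑ i, ρ (z i ⬝ᵥ S2⁻¹ *ᵥ z i) + (n / 2 : ℝ) * Real.log S2.det)) ∧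
    (∀ (S1 S2 : Matrix (Fin p) (Fin p) ℝ), S1.PosDef → S2.PosDef →
      (∀ S' : Matrix (Fin p) (Fin p) ℝ, S'.PosDef →
        (∑ i, ρ (z i ⬝ᵥ S1⁻¹ *ᵥ z i) + (n / 2 : ℝ) * Real.log S1.det) ≤
          (∑ i, ρ (z i ⬝ᵥ S'⁻¹ *ᵥ z i) + (n / 2 : ℝ) * Real.log S'.det)) →
      (∀ S' : Matrix (Fin p) (Fin p) ℝ, S'.PosDef →
        (∑ i, ρ (z i ⬝ᵥ S2⁻¹ *ᵥ z i) + (n / 2 : ℝ) * Real.log S2.det) ≤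
          (∑ i, ρ (z i ⬝ᵥ S'⁻¹ *ᵥ z i) + (n / 2 : ℝ) * Real.log S'.det)) →
      S1 = S2) := by
  have part1 : ∀ (S1 S2 : Matrix (Fin p) (Fin p) ℝ), S1.PosDef → S2.PosDef → S1 ≠ S2 →
      ∀ t ∈ Set.Ioo (0:ℝ) 1,
        (∑ i, ρ (z i ⬝ᵥ (geo S1 S2 t)⁻¹ *ᵥ z i)
            + (n / 2 : ℝ) * Real.log (geo S1 S2 t).det) <
          (1 - t) * (∑ i, ρ (z i ⬝ᵥ S1⁻¹ *ᵥ z i) + (n / 2 : ℝ) * Real.log S1.det)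
            + t * (∑ i, ρ (z i ⬝ᵥ S2⁻¹ *ᵥ z i) + (n / 2 : ℝ) * Real.log S2.det) := by
    intro S1 S2 hS1 hS2 hne t ht
    obtain ⟨c, l, L, hc, hform, he0, he1, hdet, hdet1, i₀, k₀, hc0, hl0⟩ :=
      reduction z hspan hS1 hS2 hne
    have hsum : ∑ i, ρ (∑ k, c i k * Real.exp (l k * t)) <
        ∑ i, ((1 - t) * ρ (∑ k, c i k) + t * ρ (∑ k, c i k * Real.exp (l k))) :=
      Finset.sum_lt_sum (fun i _ => (per_term ρ hmono hconv (c i) l (hc i) ht).1)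
        ⟨i₀, Finset.mem_univ _,
          (per_term ρ hmono hconv (c i₀) l (hc i₀) ht).2 ⟨k₀, hc0, hl0⟩⟩
    rw [Finset.sum_add_distrib, ← Finset.mul_sum, ← Finset.mul_sum] at hsum
    have hLsum : ∑ i, ρ (z i ⬝ᵥ (geo S1 S2 t)⁻¹ *ᵥ z i)
        = ∑ i, ρ (∑ k, c i k * Real.exp (l k * t)) :=
      Finset.sum_congr rfl fun i _ => by rw [hform t i]
    have hX : ∑ i, ρ (z i ⬝ᵥ S1⁻¹ *ᵥ z i) = ∑ i, ρ (∑ k, c i k) :=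
      Finset.sum_congr rfl fun i _ => by rw [he0 i]
    have hY : ∑ i, ρ (z i ⬝ᵥ S2⁻¹ *ᵥ z i) = ∑ i, ρ (∑ k, c i k * Real.exp (l k)) :=
      Finset.sum_congr rfl fun i _ => by rw [he1 i]
    rw [hLsum, hX, hY, hdet t, hdet1]
    have hring : (1 - t) * (∑ i, ρ (∑ k, c i k) + (n/2 : ℝ) * Real.log S1.det)
        + t * (∑ i, ρ (∑ k, c i k * Real.exp (l k)) + (n/2 : ℝ) * (Real.log S1.det + L))
        = ((1 - t) * ∑ i, ρ (∑ k, c i k) + t * ∑ i, ρ (∑ k, c i k * Real.exp (l k)))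
          + (n/2 : ℝ) * (Real.log S1.det + t * L) := by ring
    rw [hring]
    linarith [hsum]
  refine ⟨part1, ?_⟩
  intro S1 S2 hS1 hS2 hmin1 hmin2
  by_contra hne
  have hhalf : (1/2 : ℝ) ∈ Set.Ioo (0:ℝ) 1 := by norm_num
  have hgm := part1 S1 S2 hS1 hS2 hne (1/2) hhalf
  have hgp := geo_posDef hS1 hS2 (1/2)
  have h1 := hmin1 _ hgp
  have h2 := hmin2 _ hgp
  linarith
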